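/- Define ℒ := { A*f ⊕ B*g : f, g ∈ 𝔨 }. Then the QSVT operator W := R_𝔥(θ) U* R_𝔨(φ) U maps ℒ into ℒ, and maps ℒ^⊥ = (ker A) ⊕ (ker B) into itself; more precisely, for Φ₁ ∈ ker A and Φ₂ ∈ ker B, W(Φ₁ ⊕ Φ₂) = e^{i(θ−φ)}Φ₁ ⊕ e^{−i(θ+φ)}Φ₂. -/

import Mathlib

open ContinuousLinearMap Complex Submodule in
private lemma stmt14_aux_adj {H : Type*} [NormedAddCommGroup H] [InnerProductSpace ℂ H]
    [CompleteSpace H] (𝔪 𝔨 : Submodule ℂ H) [CompleteSpace 𝔪] [CompleteSpace 𝔨]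
    (U : H →L[ℂ] H) (A : 𝔪 →L[ℂ] 𝔨)
    (hA : ∀ x : 𝔪, A x = orthogonalProjection 𝔨 (U x)) (k : 𝔨) :
    (adjoint A k : H) = (orthogonalProjection 𝔪 (adjoint U k) : H) := by
  have hAeq : A = (orthogonalProjection 𝔨 : H →L[ℂ] 𝔨) ∘L (U ∘L 𝔪.subtypeL) := by
    ext x
    simp [hA]
  have h2 : adjoint A =
      ((orthogonalProjection 𝔪 : H →L[ℂ] 𝔪) ∘L adjoint U) ∘L 𝔨.subtypeL := by
    rw [hAeq, adjoint_comp, adjoint_comp, Submodule.adjoint_subtypeL,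
      Submodule.adjoint_orthogonalProjection]
  rw [h2]
  rfl

open ContinuousLinearMap Complex Submodule Polynomial in
theorem stmt14
    {H : Type*} [NormedAddCommGroup H] [InnerProductSpace ℂ H] [CompleteSpace H]
    (𝔥 𝔨 : Submodule ℂ H) [CompleteSpace 𝔥] [CompleteSpace 𝔨]
    (U : H →L[ℂ] H) (hU1 : adjoint U ∘L U = 1) (hU2 : U ∘L adjoint U = 1)
    (A : 𝔥 →L[ℂ] 𝔨) (B : 𝔥ᗮ →L[ℂ] 𝔨) (C : 𝔥 →L[ℂ] 𝔨ᗮ) (D : 𝔥ᗮ →L[ℂ] 𝔨ᗮ)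
    (hA : ∀ x : 𝔥, A x = orthogonalProjection 𝔨 (U x))
    (hB : ∀ y : 𝔥ᗮ, B y = orthogonalProjection 𝔨 (U y))
    (hC : ∀ x : 𝔥, C x = orthogonalProjection 𝔨ᗮ (U x))
    (hD : ∀ y : 𝔥ᗮ, D y = orthogonalProjection 𝔨ᗮ (U y))
    (θ φ : ℝ) (W : H →L[ℂ] H)
    (hW : W = (Complex.exp (θ * Complex.I) • (𝔥.subtypeL ∘L orthogonalProjection 𝔥) +
          Complex.exp (-θ * Complex.I) • (1 - 𝔥.subtypeL ∘L orthogonalProjection 𝔥)) ∘L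
        (adjoint U ∘L
          ((Complex.exp (φ * Complex.I) • (𝔨.subtypeL ∘L orthogonalProjection 𝔨) +
            Complex.exp (-φ * Complex.I) • (1 - 𝔨.subtypeL ∘L orthogonalProjection 𝔨)) ∘L U))) :
    (∀ f g : 𝔨, ∃ f' g' : 𝔨,
      W ((adjoint A f : H) + (adjoint B g : H)) = (adjoint A f' : H) + (adjoint B g' : H)) ∧
    (∀ Φ₁ : 𝔥, A Φ₁ = 0 → ∀ Φ₂ : 𝔥ᗮ, B Φ₂ = 0 →
      W ((Φ₁ : H) + (Φ₂ : H)) =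
        Complex.exp ((θ - φ) * Complex.I) • (Φ₁ : H) +
          Complex.exp (-(θ + φ) * Complex.I) • (Φ₂ : H)) := by
  have hUU : ∀ v : H, adjoint U (U v) = v := by
    intro v
    have := congrArg (fun T : H →L[ℂ] H => T v) hU1
    simpa using this
  have hsplit : ∀ k : 𝔨, adjoint U (k : H) = (adjoint A k : H) + (adjoint B k : H) := by
    intro k
    rw [stmt14_aux_adj 𝔥 𝔨 U A hA, stmt14_aux_adj 𝔥ᗮ 𝔨 U B hB,
      ]
    exact Submodule.starProjection_add_starProjection_orthogonal (K := 𝔥) _ |>.symm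
  have hP1 : ∀ v : 𝔥, orthogonalProjection 𝔥 (v : H) = v := fun v =>
    orthogonalProjection_mem_subspace_eq_self v
  have hP2 : ∀ v : 𝔥ᗮ, orthogonalProjection 𝔥 (v : H) = 0 := fun v =>
    orthogonalProjection_mem_subspace_orthogonalComplement_eq_zero v.2
  subst hW
  constructor
  · intro f g
    set c : ℂ := Complex.exp (φ * Complex.I) - Complex.exp (-φ * Complex.I) with hc
    refine ⟨Complex.exp (θ * Complex.I) •
        (Complex.exp (-φ * Complex.I) • f + c • (A (adjoint A f) + B (adjoint B g))),
      Complex.exp (-θ * Complex.I) •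
        (Complex.exp (-φ * Complex.I) • g + c • (A (adjoint A f) + B (adjoint B g))), ?_⟩
    have h1 : orthogonalProjection 𝔨 (U (adjoint A f : H)) = A (adjoint A f) := (hA _).symm
    have h2 : orthogonalProjection 𝔨 (U (adjoint B g : H)) = B (adjoint B g) := (hB _).symm
    simp only [comp_apply, add_apply, smul_apply, sub_apply, ContinuousLinearMap.one_apply, map_add, map_smul,
      map_sub, h1, h2, hUU, hsplit, Submodule.coe_add, Submodule.coe_smul, hP1, hP2, hc,
      Submodule.subtypeL_apply, map_zero, smul_zero, zero_add, add_zero, sub_zero,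
      ZeroMemClass.coe_zero]
    module
  · intro Φ₁ hΦ₁ Φ₂ hΦ₂
    have h1 : orthogonalProjection 𝔨 (U (Φ₁ : H)) = 0 := by rw [← hA, hΦ₁]
    have h2 : orthogonalProjection 𝔨 (U (Φ₂ : H)) = 0 := by rw [← hB, hΦ₂]
    have he1 : Complex.exp ((θ - φ : ℂ) * Complex.I) =
        Complex.exp (θ * Complex.I) * Complex.exp (-φ * Complex.I) := by
      rw [← Complex.exp_add]; congr 1; ring
    have he2 : Complex.exp (-(θ + φ : ℂ) * Complex.I) =
        Complex.exp (-θ * Complex.I) * Complex.exp (-φ * Complex.I) := by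
      rw [← Complex.exp_add]; congr 1; ring
    simp only [comp_apply, add_apply, smul_apply, sub_apply, ContinuousLinearMap.one_apply, map_add, map_smul,
      map_sub, h1, h2, hUU, hP1, hP2, Submodule.coe_add, Submodule.coe_smul,
      ZeroMemClass.coe_zero, Submodule.subtypeL_apply, map_zero, smul_zero, zero_add,
      add_zero, sub_zero]
    rw [he1, he2]
    module
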